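/- arXiv:1202.5720 — 2 statements merged into one kernel-verified Lean document; each statement's English description precedes it below -/
import Mathlib

section
/- A finite simple graph G is a cover graph if its chromatic number χ(G) is strictly less than its girth g(G). -/
open SimpleGraph

/-- A graph is a *cover graph* if it is the underlying graph of the Hasse diagram of a
partially ordered set, i.e. adjacency coincides with the (symmetrized) covering relation. -/
def SimpleGraph.IsCoverGraph {V : Type*} (G : SimpleGraph V) : Prop :=
  ∃ p : PartialOrder V, ∀ a b : V,
    G.Adj a b ↔ (@CovBy V p.toPreorder.toLT a b ∨ @CovBy V p.toPreorder.toLT b a)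

/-- The direct (tensor/categorical) product of two simple graphs. -/
def SimpleGraph.tensorProd {α β : Type*} (G : SimpleGraph α) (H : SimpleGraph β) :
    SimpleGraph (α × β) where
  Adj x y := G.Adj x.1 y.1 ∧ H.Adj x.2 y.2
  symm := ⟨fun _ _ h => ⟨h.1.symm, h.2.symm⟩⟩
  loopless := ⟨fun _ h => G.loopless.irrefl _ h.1⟩

/-- The generalized Mycielskian `M_m(G)`: levels `0,…,m` (each a copy of `V`), the edges of `G`
on level `0`, edges between consecutive levels induced by the edges of `G`, and a root `none`
adjacent to all of level `m`. -/
def SimpleGraph.Myc {V : Type*} (m : ℕ) (G : SimpleGraph V) :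
    SimpleGraph (Option (Fin (m + 1) × V)) where
  Adj x y :=
    match x, y with
    | some (i, j), some (k, l) =>
        G.Adj j l ∧ ((i.val = 0 ∧ k.val = 0) ∨ i.val + 1 = k.val ∨ k.val + 1 = i.val)
    | some (i, _), none => i.val = m
    | none, some (k, _) => k.val = m
    | none, none => False
  symm := by
    refine ⟨?_⟩
    rintro (_ | ⟨i, j⟩) (_ | ⟨k, l⟩) h
    · exact h
    · exact h
    · exact h
    · exact ⟨h.1.symm, by omega⟩
  loopless := by
    refine ⟨?_⟩
    rintro (_ | ⟨i, j⟩) h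
    · exact h
    · exact G.loopless.irrefl j h.1


private lemma walk_chain_append {V : Type*} {G : SimpleGraph V} {R : V → V → Prop}
    {a z : V} (w1 : G.Walk a z) :
    ∀ {b : V} (w2 : G.Walk z b), w1.support.Chain' R → w2.support.Chain' R →
    (w1.append w2).support.Chain' R := by
  induction w1 with
  | nil =>
    intro b w2 _ h2
    simpa using h2
  | @cons u v _ hadj p ih =>
    intro b w2 h1 h2
    rw [Walk.cons_append, Walk.support_cons]
    rw [Walk.support_cons] at h1
    refine List.isChain_cons.mpr ⟨?_, ih w2 (List.isChain_cons.mp h1).2 h2⟩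
    intro y hy
    rw [(p.append w2).support_eq_cons] at hy
    simp only [List.head?_cons, Option.mem_def, Option.some.injEq] at hy
    subst hy
    rw [p.support_eq_cons] at h1
    exact (List.isChain_cons_cons.mp h1).1

/-- A finite simple graph is a cover graph if its chromatic number is strictly less than
its girth. -/
theorem isCoverGraph_of_chromaticNumber_lt_girth {V : Type*} [Fintype V] (G : SimpleGraph V)
    (h : G.chromaticNumber < G.egirth) : G.IsCoverGraph := by
  classical
  obtain ⟨C⟩ := G.colorable_chromaticNumber_of_fintype
  set n := G.chromaticNumber.toNat with hn
  set r : V → V → Prop := fun a b => G.Adj a b ∧ (C a : ℕ) < (C b : ℕ) with hr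
  have mono : ∀ a b : V, Relation.ReflTransGen r a b → (C a : ℕ) ≤ (C b : ℕ) := by
    intro a b hab
    induction hab with
    | refl => exact le_refl _
    | tail h1 h2 ih => exact ih.trans h2.2.le
  have monoT : ∀ a b : V, Relation.TransGen r a b → (C a : ℕ) < (C b : ℕ) := by
    intro a b hab
    cases hab with
    | single h1 => exact h1.2
    | tail h1 h2 => exact (mono _ _ h1.to_reflTransGen).trans_lt h2.2
  let p : PartialOrder V :=
    { le := Relation.ReflTransGen r
      lt := fun a b => Relation.ReflTransGen r a b ∧ ¬ Relation.ReflTransGen r b a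
      le_refl := fun a => Relation.ReflTransGen.refl
      le_trans := fun a b c hab hbc => Relation.ReflTransGen.trans hab hbc
      lt_iff_le_not_ge := fun a b => Iff.rfl
      le_antisymm := by
        intro a b hab hba
        rcases Relation.reflTransGen_iff_eq_or_transGen.mp hab with rfl | h1
        · rfl
        · exact absurd (mono _ _ hba) (monoT _ _ h1).not_ge }
  have M : ∀ a b : V, Relation.TransGen r a b → ∃ w : G.Walk a b,
      w.support.Chain' (fun x y => (C x : ℕ) < (C y : ℕ)) ∧
      (∀ x ∈ w.support, (C a : ℕ) ≤ (C x : ℕ) ∧ (C x : ℕ) ≤ (C b : ℕ)) ∧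
      (C a : ℕ) + w.length ≤ (C b : ℕ) := by
    intro a b hab
    induction hab using Relation.TransGen.head_induction_on with
    | single h1 =>
      refine ⟨Walk.cons h1.1 Walk.nil, ?_, ?_, ?_⟩
      · simp only [Walk.support_cons, Walk.support_nil]
        exact List.isChain_cons_cons.mpr ⟨h1.2, List.isChain_singleton _⟩
      · intro x hx
        simp only [Walk.support_cons, Walk.support_nil, List.mem_cons,
          List.mem_singleton, List.not_mem_nil, or_false] at hx
        have := h1.2
        rcases hx with rfl | rfl <;> omega
      · simpa using h1.2
    | head h1 h2 ih =>
      obtain ⟨w, hch, hbd, hlen⟩ := ih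
      have hac := h1.2
      refine ⟨Walk.cons h1.1 w, ?_, ?_, ?_⟩
      · rw [Walk.support_cons]
        refine List.isChain_cons.mpr ⟨?_, hch⟩
        intro y hy
        rw [w.support_eq_cons] at hy
        simp only [List.head?_cons, Option.mem_def, Option.some.injEq] at hy
        subst hy
        exact hac
      · intro x hx
        rw [Walk.support_cons] at hx
        rcases List.mem_cons.mp hx with rfl | hx
        · have := hbd _ w.start_mem_support
          omega
        · have := hbd _ hx
          omega
      · rw [Walk.length_cons]
        omega
  have Key : ∀ a b z : V, G.Adj a b → Relation.TransGen r a z →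
      Relation.TransGen r z b → False := by
    intro a b z hadj haz hzb
    obtain ⟨w1, hc1, hb1, hl1⟩ := M a z haz
    obtain ⟨w2, hc2, hb2, hl2⟩ := M z b hzb
    set q := w1.append w2 with hq
    have hqc : q.support.Chain' (fun x y => (C x : ℕ) < (C y : ℕ)) :=
      walk_chain_append w1 w2 hc1 hc2
    haveI : IsTrans V (fun x y : V => (C x : ℕ) < (C y : ℕ)) := ⟨fun _ _ _ => Nat.lt_trans⟩
    have hnd : q.support.Nodup :=
      (List.isChain_iff_pairwise.mp hqc).imp (fun hxy hEq => by subst hEq; omega)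
    have hpath : q.IsPath := (Walk.isPath_def q).mpr hnd
    have hazlt := monoT _ _ haz
    have hzblt := monoT _ _ hzb
    have he : s(b, a) ∉ q.edges := by
      intro he
      rw [hq, Walk.edges_append, List.mem_append] at he
      rcases he with he | he
      · have hbmem : b ∈ w1.support := w1.fst_mem_support_of_mem_edges he
        have := hb1 _ hbmem
        omega
      · have hamem : a ∈ w2.support := w2.snd_mem_support_of_mem_edges he
        have := hb2 _ hamem
        omega
    have hcyc : (Walk.cons hadj.symm q).IsCycle :=
      (Walk.cons_isCycle_iff q hadj.symm).mpr ⟨hpath, he⟩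
    have hlen : (Walk.cons hadj.symm q).length ≤ n := by
      have hblt : (C b : ℕ) < n := (C b).isLt
      rw [Walk.length_cons, hq, Walk.length_append]
      omega
    have hg : G.egirth ≤ ((Walk.cons hadj.symm q).length : ℕ∞) := by
      rw [SimpleGraph.egirth]
      exact (iInf_le _ b).trans ((iInf_le _ _).trans (iInf_le _ hcyc))
    have hne : G.chromaticNumber ≠ ⊤ := (lt_of_lt_of_le h le_top).ne
    have hle : G.egirth ≤ G.chromaticNumber := by
      calc G.egirth ≤ ((Walk.cons hadj.symm q).length : ℕ∞) := hg
        _ ≤ (n : ℕ∞) := Nat.cast_le.mpr hlen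
        _ = G.chromaticNumber := by rw [hn]; exact ENat.coe_toNat hne
    exact absurd h hle.not_gt
  have ltTrans : ∀ x y : V, Relation.ReflTransGen r x y → ¬ Relation.ReflTransGen r y x →
      Relation.TransGen r x y := by
    intro x y hxy hyx
    rcases Relation.reflTransGen_iff_eq_or_transGen.mp hxy with rfl | h1
    · exact absurd Relation.ReflTransGen.refl hyx
    · exact h1
  refine ⟨p, fun a b => ?_⟩
  constructor
  · intro hadj
    have hne : (C a : ℕ) ≠ (C b : ℕ) := fun hh => C.valid hadj (Fin.val_injective hh)
    rcases hne.lt_or_gt with hlt | hlt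
    · left
      refine ⟨⟨Relation.ReflTransGen.single ⟨hadj, hlt⟩, fun hba => ?_⟩, ?_⟩
      · have := mono _ _ hba
        omega
      · intro z hz1 hz2
        exact Key a b z hadj (ltTrans _ _ hz1.1 hz1.2) (ltTrans _ _ hz2.1 hz2.2)
    · right
      refine ⟨⟨Relation.ReflTransGen.single ⟨hadj.symm, hlt⟩, fun hba => ?_⟩, ?_⟩
      · have := mono _ _ hba
        omega
      · intro z hz1 hz2
        exact Key b a z hadj.symm (ltTrans _ _ hz1.1 hz1.2) (ltTrans _ _ hz2.1 hz2.2)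
  · rintro (hcov | hcov)
    · have hT := ltTrans _ _ hcov.1.1 hcov.1.2
      cases hT with
      | single h1 => exact h1.1
      | tail hT1 h2 =>
        exfalso
        refine hcov.2 ⟨hT1.to_reflTransGen, fun hca => ?_⟩
          ⟨Relation.ReflTransGen.single h2, fun hbc => ?_⟩
        · exact absurd (mono _ _ hca) (monoT _ _ hT1).not_ge
        · have := mono _ _ hbc
          have := h2.2
          omega
    · have hT := ltTrans _ _ hcov.1.1 hcov.1.2
      cases hT with
      | single h1 => exact h1.1.symm
      | tail hT1 h2 =>
        exfalso
        refine hcov.2 ⟨hT1.to_reflTransGen, fun hca => ?_⟩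
          ⟨Relation.ReflTransGen.single h2, fun hbc => ?_⟩
        · exact absurd (mono _ _ hca) (monoT _ _ hT1).not_ge
        · have := mono _ _ hbc
          have := h2.2
          omega
end

section
/- For s, t > 1 and m, n ≥ 1, χ_c(M_m(C_{2s+1}) × M_n(C_{2t+1})) = min{χ_c(M_m(C_{2s+1})), χ_c(M_n(C_{2t+1}))} = 4, i.e., Hedetniemi's equality holds for the circular chromatic number of these products. -/
open SimpleGraph

open scoped Classical in
/-- `D` is an acyclic orientation of `G`: every arc is an edge, each edge is oriented in exactly
one direction, and there are no directed cycles. -/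
def SimpleGraph.IsAcyclicOrientation {V : Type*} (G : SimpleGraph V) (D : V → V → Prop) : Prop :=
  (∀ a b, D a b → G.Adj a b) ∧ (∀ a b, G.Adj a b → (D a b ↔ ¬ D b a)) ∧
    ∀ a, ¬ Relation.TransGen D a a

open scoped Classical in
/-- The number of forward arcs of the cycle `C` with respect to the orientation `D`. -/
noncomputable def SimpleGraph.fwdArcs {V : Type*} (G : SimpleGraph V) (D : V → V → Prop)
    {v : V} (C : G.Walk v v) : ℕ :=
  (C.darts.filter fun d => decide (D d.toProd.1 d.toProd.2)).length

open scoped Classical in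
/-- The number of backward arcs of the cycle `C` with respect to the orientation `D`. -/
noncomputable def SimpleGraph.bwdArcs {V : Type*} (G : SimpleGraph V) (D : V → V → Prop)
    {v : V} (C : G.Walk v v) : ℕ :=
  (C.darts.filter fun d => decide (D d.toProd.2 d.toProd.1)).length

/-- The imbalance `Imb(D)` of an orientation `D`: the maximum over all cycles `C` of
`max (|C|/|(C,D)⁺|) (|C|/|(C,D)⁻|)`, with the convention that it is `2` if `G` has no cycles. -/
noncomputable def SimpleGraph.Imb {V : Type*} (G : SimpleGraph V) (D : V → V → Prop) : ℝ :=
  sSup (insert 2 {x : ℝ | ∃ (v : V) (C : G.Walk v v), C.IsCycle ∧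
    x = max ((C.length : ℝ) / (G.fwdArcs D C : ℝ)) ((C.length : ℝ) / (G.bwdArcs D C : ℝ))})

/-- The circular chromatic number, via the Goddyn–Tarsi–Zhang characterization:
the minimum imbalance over all acyclic orientations. -/
noncomputable def SimpleGraph.circChrom {V : Type*} (G : SimpleGraph V) : ℝ :=
  sInf {x : ℝ | ∃ D : V → V → Prop, G.IsAcyclicOrientation D ∧ x = G.Imb D}



namespace CCWork

variable {V : Type*} {G : SimpleGraph V} {D : V → V → Prop}

/-- A dependent arc: an arc `a → b` together with a directed path of length ≥ 2 from `a` to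
`b`. -/
def DepArc (D : V → V → Prop) : Prop :=
  ∃ a b c, D a b ∧ D a c ∧ Relation.TransGen D c b

open scoped Classical in
noncomputable def sig (D : V → V → Prop) (u v : V) : ℤ := if D u v then 1 else -1

lemma flip (hD : G.IsAcyclicOrientation D) {u v : V} (h : G.Adj u v) (hn : ¬ D u v) : D v u :=
  (hD.2.1 v u h.symm).mpr hn

lemma notboth (hD : G.IsAcyclicOrientation D) {u v : V} (h : G.Adj u v) (h1 : D u v) :
    ¬ D v u := (hD.2.1 u v h).mp h1

lemma sig_pos {u v : V} (h : D u v) : sig D u v = 1 := if_pos h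
lemma sig_neg {u v : V} (h : ¬ D u v) : sig D u v = -1 := if_neg h

lemma sig_rev (hD : G.IsAcyclicOrientation D) {u v : V} (h : G.Adj u v) :
    sig D v u = - sig D u v := by
  by_cases hd : D u v
  · rw [sig_pos hd, sig_neg (notboth hD h hd)]
  · rw [sig_neg hd, sig_pos (flip hD h hd)]; norm_num

lemma square_balance (hD : G.IsAcyclicOrientation D) (hdep : ¬ DepArc D) {p q r w : V}
    (hpq : G.Adj p q) (hqr : G.Adj q r) (hrw : G.Adj r w) (hwp : G.Adj w p) :
    sig D p q + sig D q r + sig D r w + sig D w p = 0 := by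
  by_cases h1 : D p q <;> by_cases h2 : D q r <;> by_cases h3 : D r w <;> by_cases h4 : D w p
  · exact absurd (Relation.TransGen.head h1 (.head h2 (.head h3 (.single h4)))) (hD.2.2 p)
  · exact absurd ⟨p, w, q, flip hD hwp h4, h1, .head h2 (.single h3)⟩ hdep
  · exact absurd ⟨w, r, p, flip hD hrw h3, h4, .head h1 (.single h2)⟩ hdep
  · simp [sig, h1, h2, h3, h4]
  · exact absurd ⟨r, q, w, flip hD hqr h2, h3, .head h4 (.single h1)⟩ hdep
  · simp [sig, h1, h2, h3, h4]
  · simp [sig, h1, h2, h3, h4]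
  · exact absurd ⟨p, q, w, h1, flip hD hwp h4, .head (flip hD hrw h3) (.single (flip hD hqr h2))⟩ hdep
  · exact absurd ⟨q, p, r, flip hD hpq h1, h2, .head h3 (.single h4)⟩ hdep
  · simp [sig, h1, h2, h3, h4]
  · simp [sig, h1, h2, h3, h4]
  · exact absurd ⟨q, r, p, h2, flip hD hpq h1, .head (flip hD hwp h4) (.single (flip hD hrw h3))⟩ hdep
  · simp [sig, h1, h2, h3, h4]
  · exact absurd ⟨r, w, q, h3, flip hD hqr h2, .head (flip hD hpq h1) (.single (flip hD hwp h4))⟩ hdep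
  · exact absurd ⟨w, p, r, h4, flip hD hrw h3, .head (flip hD hqr h2) (.single (flip hD hpq h1))⟩ hdep
  · exact absurd (Relation.TransGen.head (flip hD hwp h4) (.head (flip hD hrw h3)
      (.head (flip hD hqr h2) (.single (flip hD hpq h1))))) (hD.2.2 p)

end CCWork

namespace CCWork2
open CCWork
variable {V : Type*} {G : SimpleGraph V} {D : V → V → Prop}

def Fwd (D : V → V → Prop) {u v : V} (W : G.Walk u v) : Prop :=
  ∀ d ∈ W.darts, D d.toProd.1 d.toProd.2

lemma fwd_cons {u x v : V} (h : G.Adj u x) (W : G.Walk x v) (hW : Fwd D (Walk.cons h W)) :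
    D u x ∧ Fwd D W := by
  constructor
  · exact hW ⟨(u, x), h⟩ (by simp [Walk.darts_cons])
  · intro d hd; exact hW d (by simp [Walk.darts_cons, hd])

lemma forward_transGen {u v : V} (W : G.Walk u v) (hW : Fwd D W) (h0 : 0 < W.length) :
    Relation.TransGen D u v := by
  induction W with
  | nil => simp at h0
  | @cons a x c h W' ih =>
    obtain ⟨hd, hW'⟩ := fwd_cons h W' hW
    cases W' with
    | nil => exact .single hd
    | cons h'' W'' => exact .head hd (ih hW' (by simp [Walk.length_cons]))

lemma transGen_forwardWalk (hD : G.IsAcyclicOrientation D) {u v : V}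
    (h : Relation.TransGen D u v) :
    ∃ W : G.Walk u v, 0 < W.length ∧ Fwd D W := by
  induction h using Relation.TransGen.head_induction_on with
  | single h =>
    exact ⟨Walk.cons (hD.1 _ _ h) Walk.nil, by simp,
      by intro d hd; simp [Walk.darts_cons] at hd; subst hd; exact h⟩
  | head h' _ ihP =>
    obtain ⟨W, hlen, hfwd⟩ := ihP
    refine ⟨Walk.cons (hD.1 _ _ h') W, by simp, ?_⟩
    intro d hd
    simp only [Walk.darts_cons, List.mem_cons] at hd
    rcases hd with rfl | hd
    · exact h'
    · exact hfwd d hd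

lemma forward_mem_support {u v : V} (W : G.Walk u v) (hW : Fwd D W) :
    ∀ x ∈ W.support, x = u ∨ Relation.TransGen D u x := by
  induction W with
  | nil => intro x hx; simp at hx; exact Or.inl hx
  | @cons a c b h W' ih =>
    obtain ⟨hd, hW'⟩ := fwd_cons h W' hW
    intro x hx
    simp only [Walk.support_cons, List.mem_cons] at hx
    rcases hx with rfl | hx
    · exact Or.inl rfl
    · rcases ih hW' x hx with rfl | htg
      · exact Or.inr (.single hd)
      · exact Or.inr (.head hd htg)

lemma forward_support_nodup (hD : G.IsAcyclicOrientation D) {u v : V} (W : G.Walk u v)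
    (hW : Fwd D W) : W.support.Nodup := by
  induction W with
  | nil => simp
  | @cons a c b h W' ih =>
    obtain ⟨hd, hW'⟩ := fwd_cons h W' hW
    rw [Walk.support_cons, List.nodup_cons]
    refine ⟨fun hmem => ?_, ih hW'⟩
    rcases forward_mem_support W' hW' a hmem with rfl | htg
    · exact hD.2.2 a (.single hd)
    · exact hD.2.2 a (.head hd htg)

lemma length_ne_two {a b : V} (P : G.Walk a b) (hadj : G.Adj a b)
    (h3 : ∀ {x y z : V}, G.Adj x y → G.Adj y z → G.Adj x z → False) : P.length ≠ 2 := by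
  match P with
  | .nil => simp
  | .cons h .nil => simp
  | .cons h (.cons h' .nil) => exact absurd hadj (fun hab => h3 h h' hab)
  | .cons _ (.cons _ (.cons _ _)) => simp only [Walk.length_cons]; omega

lemma edge_not_mem (hD : G.IsAcyclicOrientation D) {a b : V} (P : G.Walk a b)
    (hfwd : Fwd D P) (hnd : P.support.Nodup) (hlen : 2 ≤ P.length) : s(b, a) ∉ P.edges := by
  cases P with
  | nil => simp at hlen
  | @cons a c b h W =>
    obtain ⟨hd, hW⟩ := fwd_cons h W hfwd
    rw [Walk.support_cons, List.nodup_cons] at hnd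
    rw [Walk.length_cons] at hlen
    intro hmem
    rw [Walk.edges_cons, List.mem_cons] at hmem
    rcases hmem with heq | hmem
    · rw [Sym2.eq_iff] at heq
      rcases heq with ⟨rfl, rfl⟩ | ⟨rfl, -⟩
      · exact hnd.1 W.end_mem_support
      · exact hD.2.2 _ (forward_transGen _ hW (by omega))
    · exact hnd.1 (W.snd_mem_support_of_mem_edges hmem)

open scoped Classical in
lemma bwd_count_one (hD : G.IsAcyclicOrientation D) {a b : V} (hab : D a b)
    (P : G.Walk a b) (hfwd : Fwd D P) :
    G.bwdArcs D (Walk.cons ((hD.1 a b hab).symm) P) = 1 := by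
  rw [SimpleGraph.bwdArcs, Walk.darts_cons, List.filter_cons]
  have h1 : decide (D (⟨(b, a), (hD.1 a b hab).symm⟩ : G.Dart).toProd.2
      (⟨(b, a), (hD.1 a b hab).symm⟩ : G.Dart).toProd.1) = true := by
    simpa using hab
  rw [if_pos h1]
  have h2 : P.darts.filter (fun d => decide (D d.toProd.2 d.toProd.1)) = [] := by
    rw [List.filter_eq_nil_iff]
    intro d hd
    simpa using notboth hD d.adj (hfwd d hd)
  simp [h2]

lemma cycle_length_le_card [Fintype V] {v : V} (C : G.Walk v v) (hC : C.IsCycle) :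
    C.length ≤ Fintype.card V := by
  have h1 : C.support.tail.length = C.length := by
    have h := C.length_support
    simp only [List.length_tail, h, Nat.add_sub_cancel]
  calc C.length = C.support.tail.length := h1.symm
    _ ≤ Fintype.card V := hC.2.length_le_card

lemma bddAbove_ratios [Fintype V] (G : SimpleGraph V) (D : V → V → Prop) :
    BddAbove (insert (2:ℝ) {x : ℝ | ∃ (v : V) (C : G.Walk v v), C.IsCycle ∧
      x = max ((C.length : ℝ) / (G.fwdArcs D C : ℝ)) ((C.length : ℝ) / (G.bwdArcs D C : ℝ))}) := by
  refine ⟨max 2 (Fintype.card V), ?_⟩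
  rintro x (rfl | ⟨v, C, hC, rfl⟩)
  · exact le_max_left _ _
  · have hlen : (C.length : ℝ) ≤ Fintype.card V := by
      exact_mod_cast cycle_length_le_card C hC
    have hbound : ∀ n : ℕ, (C.length : ℝ) / (n : ℝ) ≤ Fintype.card V := by
      intro n
      rcases Nat.eq_zero_or_pos n with rfl | hn
      · simp only [Nat.cast_zero, div_zero]
        positivity
      · calc (C.length : ℝ) / (n : ℝ) ≤ (C.length : ℝ) / 1 := by
              apply div_le_div_of_nonneg_left (by positivity) (by norm_num)
              exact_mod_cast hn
          _ = (C.length : ℝ) := div_one _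
          _ ≤ _ := hlen
    refine le_trans (max_le (hbound _) (hbound _)) (le_max_right _ _)

lemma le_imb_of_depArc [Fintype V] (hD : G.IsAcyclicOrientation D)
    (h3 : ∀ {x y z : V}, G.Adj x y → G.Adj y z → G.Adj x z → False)
    (hdep : CCWork.DepArc D) : (4:ℝ) ≤ G.Imb D := by
  obtain ⟨a, b, c, hab, hac, htg⟩ := hdep
  obtain ⟨W0, hW0len, hW0fwd⟩ := transGen_forwardWalk hD htg
  have hadjac : G.Adj a c := hD.1 _ _ hac
  have hPfwd : Fwd D (Walk.cons hadjac W0) := by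
    intro d hd
    rw [Walk.darts_cons, List.mem_cons] at hd
    rcases hd with rfl | hd
    · exact hac
    · exact hW0fwd d hd
  set P : G.Walk a b := Walk.cons hadjac W0 with hP
  have hPnd : P.support.Nodup := forward_support_nodup hD P hPfwd
  have hadj : G.Adj a b := hD.1 _ _ hab
  have hPlen2 : 1 ≤ P.length := by rw [hP, Walk.length_cons]; omega
  have hPlen : 3 ≤ P.length := by
    have h2 : 2 ≤ P.length := by rw [hP, Walk.length_cons]; omega
    have hne := length_ne_two P hadj h3
    omega
  have hcyc : (Walk.cons hadj.symm P).IsCycle := by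
    rw [Walk.cons_isCycle_iff]
    exact ⟨(Walk.isPath_def P).mpr hPnd, edge_not_mem hD P hPfwd hPnd (by omega)⟩
  have hbwd : G.bwdArcs D (Walk.cons hadj.symm P) = 1 := bwd_count_one hD hab P hPfwd
  have hClen : (4:ℝ) ≤ ((Walk.cons hadj.symm P).length : ℝ) := by
    have h4 : 4 ≤ (Walk.cons hadj.symm P).length := by rw [Walk.length_cons]; omega
    exact_mod_cast h4
  have hmem : max (((Walk.cons hadj.symm P).length : ℝ) / (G.fwdArcs D (Walk.cons hadj.symm P) : ℝ))
      (((Walk.cons hadj.symm P).length : ℝ) / (G.bwdArcs D (Walk.cons hadj.symm P) : ℝ)) ∈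
      insert (2:ℝ) {x : ℝ | ∃ (v : V) (C : G.Walk v v), C.IsCycle ∧
      x = max ((C.length : ℝ) / (G.fwdArcs D C : ℝ)) ((C.length : ℝ) / (G.bwdArcs D C : ℝ))} := by
    exact Set.mem_insert_iff.mpr (Or.inr ⟨b, Walk.cons hadj.symm P, hcyc, rfl⟩)
  have hle : (4:ℝ) ≤ max (((Walk.cons hadj.symm P).length : ℝ) / (G.fwdArcs D (Walk.cons hadj.symm P) : ℝ))
      (((Walk.cons hadj.symm P).length : ℝ) / (G.bwdArcs D (Walk.cons hadj.symm P) : ℝ)) := by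
    refine le_trans ?_ (le_max_right _ _)
    rw [hbwd]
    simpa using hClen
  exact le_trans hle (le_csSup (bddAbove_ratios G D) hmem)

end CCWork2

namespace CCWork3
open CCWork CCWork2
variable {V : Type*} {G : SimpleGraph V}

def orientOf (G : SimpleGraph V) (c : V → Fin 4) : V → V → Prop :=
  fun u v => G.Adj u v ∧ c u < c v

lemma orientOf_trans {c : V → Fin 4} {u v : V}
    (h : Relation.TransGen (orientOf G c) u v) : c u < c v := by
  induction h with
  | single h => exact h.2
  | tail _ h ih => exact lt_trans ih h.2

lemma orientOf_isAcyclic (c : V → Fin 4) (hc : ∀ {u v : V}, G.Adj u v → c u ≠ c v) :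
    G.IsAcyclicOrientation (orientOf G c) := by
  refine ⟨fun a b h => h.1, fun a b hab => ?_, fun a h => ?_⟩
  · constructor
    · rintro ⟨-, hlt⟩ ⟨-, hlt'⟩; exact absurd (lt_trans hlt hlt') (lt_irrefl _)
    · intro hn
      refine ⟨hab, ?_⟩
      rcases lt_or_gt_of_ne (hc hab) with h | h
      · exact h
      · exact absurd ⟨hab.symm, h⟩ hn
  · exact absurd (orientOf_trans h) (lt_irrefl _)

open scoped Classical in
lemma count_bounds (c : V → Fin 4) (hc : ∀ {u v : V}, G.Adj u v → c u ≠ c v) {u v : V}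
    (W : G.Walk u v) :
    ((W.darts.filter fun d => decide (orientOf G c d.toProd.1 d.toProd.2)).length
      + (W.darts.filter fun d => decide (orientOf G c d.toProd.2 d.toProd.1)).length = W.length)
    ∧ ((c v : ℤ) - (c u : ℤ) ≤
        3 * ((W.darts.filter fun d => decide (orientOf G c d.toProd.1 d.toProd.2)).length : ℤ)
        - ((W.darts.filter fun d => decide (orientOf G c d.toProd.2 d.toProd.1)).length : ℤ))
    ∧ (((W.darts.filter fun d => decide (orientOf G c d.toProd.1 d.toProd.2)).length : ℤ)
        - 3 * ((W.darts.filter fun d => decide (orientOf G c d.toProd.2 d.toProd.1)).length : ℤ)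
        ≤ (c v : ℤ) - (c u : ℤ)) := by
  induction W with
  | nil => simp
  | @cons a x b h W ih =>
    have hvals : (c a : ℤ) < 4 ∧ (c x : ℤ) < 4 := by
      constructor <;> exact_mod_cast (Fin.is_lt _)
    rcases lt_or_gt_of_ne (hc h) with hlt | hlt
    · have e1 : decide (orientOf G c a x) = true := decide_eq_true ⟨h, hlt⟩
      have e2 : decide (orientOf G c x a) = false := by
        apply decide_eq_false
        rintro ⟨-, hlt'⟩; exact absurd (lt_trans hlt hlt') (lt_irrefl _)
      have hdiff : 1 ≤ (c x : ℤ) - (c a : ℤ) := by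
        have : (c a : ℤ) < (c x : ℤ) := by exact_mod_cast hlt
        omega
      simp only [Walk.darts_cons, List.filter_cons, e1, e2, if_true, if_false,
        Bool.false_eq_true, List.length_cons, Walk.length_cons]
      refine ⟨by omega, by push_cast; omega, by push_cast; omega⟩
    · have e1 : decide (orientOf G c a x) = false := by
        apply decide_eq_false
        rintro ⟨-, hlt'⟩; exact absurd (lt_trans hlt hlt') (lt_irrefl _)
      have e2 : decide (orientOf G c x a) = true := decide_eq_true ⟨h.symm, hlt⟩
      have hdiff : 1 ≤ (c a : ℤ) - (c x : ℤ) := by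
        have : (c x : ℤ) < (c a : ℤ) := by exact_mod_cast hlt
        omega
      simp only [Walk.darts_cons, List.filter_cons, e1, e2, if_true, if_false,
        Bool.false_eq_true, List.length_cons, Walk.length_cons]
      refine ⟨by omega, by push_cast; omega, by push_cast; omega⟩

open scoped Classical in
lemma imb_le_four (c : V → Fin 4) (hc : ∀ {u v : V}, G.Adj u v → c u ≠ c v) :
    G.Imb (orientOf G c) ≤ 4 := by
  apply Real.sSup_le _ (by norm_num)
  rintro x (rfl | ⟨v, C, hC, rfl⟩)
  · norm_num
  · obtain ⟨hsum, hub, hlb⟩ := count_bounds c hc C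
    have hL : 3 ≤ C.length := hC.three_le_length
    have hzero : (c v : ℤ) - (c v : ℤ) = 0 := by ring
    rw [hzero] at hub hlb
    set f := (C.darts.filter fun d => decide (orientOf G c d.toProd.1 d.toProd.2)).length with hf
    set bb := (C.darts.filter fun d => decide (orientOf G c d.toProd.2 d.toProd.1)).length with hb
    have hfwd : G.fwdArcs (orientOf G c) C = f := rfl
    have hbwd : G.bwdArcs (orientOf G c) C = bb := rfl
    have hf1 : 1 ≤ f := by omega
    have hb1 : 1 ≤ bb := by omega
    have hLf : C.length ≤ 4 * f := by omega
    have hLb : C.length ≤ 4 * bb := by omega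
    rw [hfwd, hbwd]
    apply max_le
    · rw [div_le_iff₀ (by exact_mod_cast hf1 : (0:ℝ) < (f:ℝ))]
      have h4 : (C.length : ℝ) ≤ 4 * (f:ℝ) := by exact_mod_cast hLf
      linarith
    · rw [div_le_iff₀ (by exact_mod_cast hb1 : (0:ℝ) < (bb:ℝ))]
      have h4 : (C.length : ℝ) ≤ 4 * (bb:ℝ) := by exact_mod_cast hLb
      linarith

end CCWork3

namespace CCCore
open CCWork CCWork2 Finset

variable {s : ℕ}

lemma neZa (s : ℕ) : NeZero (2*s+1) := ⟨by omega⟩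

lemma cyc_succ_adj (hs : 1 ≤ s) (x : Fin (2*s+1)) :
    (cycleGraph (2*s+1)).Adj x (x+1) := by
  haveI := neZa s
  rw [cycleGraph_adj']
  right
  have h1 : x + 1 - x = 1 := by abel
  rw [h1, Fin.val_one']
  exact Nat.mod_eq_of_lt (by omega)

lemma cyc_pred_adj (hs : 1 ≤ s) (x : Fin (2*s+1)) :
    (cycleGraph (2*s+1)).Adj x (x-1) := by
  haveI := neZa s
  have h := (cyc_succ_adj hs (x-1)).symm
  simpa using h

/-- vertex of `Myc m (cycleGraph (2s+1))` at level `i` (truncated at `m`). -/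
def vt (m s : ℕ) (i : ℕ) (x : Fin (2*s+1)) : Option (Fin (m+1) × Fin (2*s+1)) :=
  some (⟨min i m, by omega⟩, x)

lemma adj0 (m : ℕ) {a b : Fin (2*s+1)} (h : (cycleGraph (2*s+1)).Adj a b) :
    (Myc m (cycleGraph (2*s+1))).Adj (vt m s 0 a) (vt m s 0 b) :=
  ⟨h, Or.inl (by simp)⟩

lemma adjUp (m : ℕ) {i : ℕ} (hi : i + 1 ≤ m) {a b : Fin (2*s+1)}
    (h : (cycleGraph (2*s+1)).Adj a b) :
    (Myc m (cycleGraph (2*s+1))).Adj (vt m s i a) (vt m s (i+1) b) := by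
  refine ⟨h, Or.inr (Or.inl ?_)⟩
  show min i m + 1 = min (i+1) m
  omega

lemma adjTop (m : ℕ) (x : Fin (2*s+1)) :
    (Myc m (cycleGraph (2*s+1))).Adj (vt m s m x) none := by
  show min m m = m
  omega

lemma shift_sum (d : Fin (2*s+1)) (f : Fin (2*s+1) → ℤ) :
    ∑ x, f (x + d) = ∑ x, f x := by
  haveI := neZa s
  exact Equiv.sum_comp (Equiv.addRight d) f

lemma shiftp (f g : Fin (2*s+1) → ℤ) (hfg : ∀ z, f (z+1) = g z) : ∑ y, f y = ∑ z, g z := by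
  rw [← shift_sum 1 f]
  exact Finset.sum_congr rfl (fun z _ => hfg z)

lemma shiftm (f g : Fin (2*s+1) → ℤ) (hfg : ∀ z, f (z-1) = g z) : ∑ y, f y = ∑ z, g z := by
  rw [← shift_sum (-1) f]
  refine Finset.sum_congr rfl (fun z _ => ?_)
  rw [← hfg z, sub_eq_add_neg]

/-- the sum over `y` of (up-right minus up-left) signs into level `j+1`. -/
noncomputable def Fj (m s : ℕ)
    (D : Option (Fin (m+1) × Fin (2*s+1)) → Option (Fin (m+1) × Fin (2*s+1)) → Prop)
    (j : ℕ) : ℤ :=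
  ∑ y : Fin (2*s+1),
    (sig D (vt m s j (y-1)) (vt m s (j+1) y) - sig D (vt m s j (y+1)) (vt m s (j+1) y))

section core
variable {m : ℕ}
  {D : Option (Fin (m+1) × Fin (2*s+1)) → Option (Fin (m+1) × Fin (2*s+1)) → Prop}

/-- sum of the two lower edges of diamonds with base at level `j`. -/
lemma sum_lower (hs : 1 ≤ s)
    (hD : (Myc m (cycleGraph (2*s+1))).IsAcyclicOrientation D) {j : ℕ} (hj : j + 1 ≤ m) :
    ∑ y : Fin (2*s+1), (sig D (vt m s (j+1) (y+1)) (vt m s j y)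
      + sig D (vt m s j y) (vt m s (j+1) (y-1))) = - Fj m s D j := by
  haveI := neZa s
  have h1 : ∀ y : Fin (2*s+1), sig D (vt m s (j+1) (y+1)) (vt m s j y)
      = - sig D (vt m s j y) (vt m s (j+1) (y+1)) := fun y =>
    sig_rev hD (adjUp m hj (cyc_succ_adj hs y))
  have step1 : ∑ y : Fin (2*s+1), (sig D (vt m s (j+1) (y+1)) (vt m s j y)
      + sig D (vt m s j y) (vt m s (j+1) (y-1)))
      = ∑ y : Fin (2*s+1), (sig D (vt m s j y) (vt m s (j+1) (y-1))
        - sig D (vt m s j y) (vt m s (j+1) (y+1))) :=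
    Finset.sum_congr rfl (fun y _ => by rw [h1 y]; ring)
  rw [step1, Finset.sum_sub_distrib]
  have step2 : ∑ y : Fin (2*s+1), sig D (vt m s j y) (vt m s (j+1) (y-1))
      = ∑ z : Fin (2*s+1), sig D (vt m s j (z+1)) (vt m s (j+1) z) := by
    apply shiftp; intro z; simp
  have step3 : ∑ y : Fin (2*s+1), sig D (vt m s j y) (vt m s (j+1) (y+1))
      = ∑ z : Fin (2*s+1), sig D (vt m s j (z-1)) (vt m s (j+1) z) := by
    apply shiftm; intro z; simp
  have hFj : Fj m s D j = ∑ y : Fin (2*s+1),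
      (sig D (vt m s j (y-1)) (vt m s (j+1) y) - sig D (vt m s j (y+1)) (vt m s (j+1) y)) := rfl
  rw [step2, step3, hFj, Finset.sum_sub_distrib]
  ring

lemma level0 (hs : 1 ≤ s) (hm : 1 ≤ m)
    (hD : (Myc m (cycleGraph (2*s+1))).IsAcyclicOrientation D) (hdep : ¬ DepArc D) :
    Fj m s D 0 = 2 * ∑ x : Fin (2*s+1), sig D (vt m s 0 x) (vt m s 0 (x+1)) := by
  haveI := neZa s
  have hbal : ∀ x : Fin (2*s+1),
      sig D (vt m s 0 x) (vt m s 0 (x+1)) + sig D (vt m s 0 (x+1)) (vt m s 0 (x+1+1))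
      + sig D (vt m s 0 (x+1+1)) (vt m s 1 (x+1)) + sig D (vt m s 1 (x+1)) (vt m s 0 x) = 0 := by
    intro x
    refine square_balance hD hdep (adj0 m (cyc_succ_adj hs x)) (adj0 m (cyc_succ_adj hs (x+1)))
      ?_ ?_
    · exact adjUp (s := s) m hm (i := 0) (by simpa using cyc_pred_adj hs (x+1+1))
    · exact (adjUp m hm (i := 0) (cyc_succ_adj hs x)).symm
  have hsum : ∑ x : Fin (2*s+1), (sig D (vt m s 0 x) (vt m s 0 (x+1))
      + sig D (vt m s 0 (x+1)) (vt m s 0 (x+1+1))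
      + sig D (vt m s 0 (x+1+1)) (vt m s 1 (x+1)) + sig D (vt m s 1 (x+1)) (vt m s 0 x)) = 0 :=
    Finset.sum_eq_zero (fun x _ => hbal x)
  rw [Finset.sum_add_distrib, Finset.sum_add_distrib, Finset.sum_add_distrib] at hsum
  have e2 : ∑ x : Fin (2*s+1), sig D (vt m s 0 (x+1)) (vt m s 0 (x+1+1))
      = ∑ x : Fin (2*s+1), sig D (vt m s 0 x) (vt m s 0 (x+1)) :=
    shift_sum 1 (fun x => sig D (vt m s 0 x) (vt m s 0 (x+1)))
  have e34 : ∑ x : Fin (2*s+1), sig D (vt m s 0 (x+1+1)) (vt m s 1 (x+1))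
      + ∑ x : Fin (2*s+1), sig D (vt m s 1 (x+1)) (vt m s 0 x) = - Fj m s D 0 := by
    rw [← Finset.sum_add_distrib]
    have re : ∑ x : Fin (2*s+1), (sig D (vt m s 0 (x+1+1)) (vt m s 1 (x+1))
        + sig D (vt m s 1 (x+1)) (vt m s 0 x))
        = ∑ y : Fin (2*s+1), (sig D (vt m s 0 (y+1)) (vt m s 1 y)
          + sig D (vt m s 1 y) (vt m s 0 (y-1))) := by
      apply shiftm; intro z; simp
    rw [re]
    have hpt : ∀ y : Fin (2*s+1), sig D (vt m s 0 (y+1)) (vt m s 1 y)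
        + sig D (vt m s 1 y) (vt m s 0 (y-1))
        = - (sig D (vt m s 0 (y-1)) (vt m s 1 y) - sig D (vt m s 0 (y+1)) (vt m s 1 y)) := by
      intro y
      have hadj : (Myc m (cycleGraph (2*s+1))).Adj (vt m s 0 (y-1)) (vt m s 1 y) :=
        adjUp (s := s) m hm (i := 0) ((cyc_pred_adj hs y).symm)
      rw [sig_rev hD hadj]
      ring
    have hF0 : Fj m s D 0 = ∑ y : Fin (2*s+1),
        (sig D (vt m s 0 (y-1)) (vt m s 1 y) - sig D (vt m s 0 (y+1)) (vt m s 1 y)) := rfl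
    rw [Finset.sum_congr rfl (fun y _ => hpt y), Finset.sum_neg_distrib, hF0]
  linarith [hsum, e2, e34]

lemma mid (hs : 1 ≤ s)
    (hD : (Myc m (cycleGraph (2*s+1))).IsAcyclicOrientation D) (hdep : ¬ DepArc D)
    {j : ℕ} (hj : j + 1 + 1 ≤ m) : Fj m s D (j+1) = Fj m s D j := by
  haveI := neZa s
  have hbal : ∀ y : Fin (2*s+1),
      sig D (vt m s (j+1) (y-1)) (vt m s (j+1+1) y)
      + sig D (vt m s (j+1+1) y) (vt m s (j+1) (y+1))
      + sig D (vt m s (j+1) (y+1)) (vt m s j y)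
      + sig D (vt m s j y) (vt m s (j+1) (y-1)) = 0 := by
    intro y
    refine square_balance hD hdep ?_ ?_ ?_ ?_
    · exact adjUp (s := s) m hj (i := j+1) ((cyc_pred_adj hs y).symm)
    · exact (adjUp (s := s) m hj (i := j+1) ((cyc_succ_adj hs y).symm)).symm
    · exact (adjUp (s := s) m (by omega) (i := j) (cyc_succ_adj hs y)).symm
    · exact adjUp (s := s) m (by omega) (i := j) (cyc_pred_adj hs y)
  have hsum : ∑ y : Fin (2*s+1), (sig D (vt m s (j+1) (y-1)) (vt m s (j+1+1) y)
      + sig D (vt m s (j+1+1) y) (vt m s (j+1) (y+1))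
      + sig D (vt m s (j+1) (y+1)) (vt m s j y)
      + sig D (vt m s j y) (vt m s (j+1) (y-1))) = 0 :=
    Finset.sum_eq_zero (fun y _ => hbal y)
  rw [Finset.sum_add_distrib, Finset.sum_add_distrib, Finset.sum_add_distrib] at hsum
  have e12 : ∑ y : Fin (2*s+1), sig D (vt m s (j+1) (y-1)) (vt m s (j+1+1) y)
      + ∑ y : Fin (2*s+1), sig D (vt m s (j+1+1) y) (vt m s (j+1) (y+1)) = Fj m s D (j+1) := by
    have hpt : ∀ y : Fin (2*s+1), sig D (vt m s (j+1+1) y) (vt m s (j+1) (y+1))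
        = - sig D (vt m s (j+1) (y+1)) (vt m s (j+1+1) y) := fun y =>
      sig_rev hD (adjUp (s := s) m hj (i := j+1) ((cyc_succ_adj hs y).symm))
    have hFj1 : Fj m s D (j+1) = ∑ y : Fin (2*s+1),
        (sig D (vt m s (j+1) (y-1)) (vt m s (j+1+1) y)
          - sig D (vt m s (j+1) (y+1)) (vt m s (j+1+1) y)) := rfl
    rw [Finset.sum_congr rfl (fun y _ => hpt y), Finset.sum_neg_distrib, hFj1,
      Finset.sum_sub_distrib]
    ring
  have e34 : ∑ y : Fin (2*s+1), sig D (vt m s (j+1) (y+1)) (vt m s j y)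
      + ∑ y : Fin (2*s+1), sig D (vt m s j y) (vt m s (j+1) (y-1)) = - Fj m s D j := by
    rw [← Finset.sum_add_distrib]
    exact sum_lower hs hD (by omega)
  linarith [hsum, e12, e34]

lemma top (hs : 1 ≤ s)
    (hD : (Myc m (cycleGraph (2*s+1))).IsAcyclicOrientation D) (hdep : ¬ DepArc D)
    {j : ℕ} (hj : j + 1 = m) : Fj m s D j = 0 := by
  haveI := neZa s
  have hbal : ∀ y : Fin (2*s+1),
      sig D (vt m s (j+1) (y-1)) none
      + sig D none (vt m s (j+1) (y+1))
      + sig D (vt m s (j+1) (y+1)) (vt m s j y)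
      + sig D (vt m s j y) (vt m s (j+1) (y-1)) = 0 := by
    intro y
    refine square_balance hD hdep ?_ ?_ ?_ ?_
    · rw [show j + 1 = m from hj]; exact adjTop m (y-1)
    · rw [show j + 1 = m from hj]; exact (adjTop m (y+1)).symm
    · exact (adjUp (s := s) m (by omega) (i := j) (cyc_succ_adj hs y)).symm
    · exact adjUp (s := s) m (by omega) (i := j) (cyc_pred_adj hs y)
  have hsum : ∑ y : Fin (2*s+1), (sig D (vt m s (j+1) (y-1)) none
      + sig D none (vt m s (j+1) (y+1))
      + sig D (vt m s (j+1) (y+1)) (vt m s j y)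
      + sig D (vt m s j y) (vt m s (j+1) (y-1))) = 0 :=
    Finset.sum_eq_zero (fun y _ => hbal y)
  rw [Finset.sum_add_distrib, Finset.sum_add_distrib, Finset.sum_add_distrib] at hsum
  have e1 : ∑ y : Fin (2*s+1), sig D (vt m s (j+1) (y-1)) none
      = ∑ y : Fin (2*s+1), sig D (vt m s (j+1) y) none := by
    apply shiftp; intro z; simp
  have e2 : ∑ y : Fin (2*s+1), sig D none (vt m s (j+1) (y+1))
      = - ∑ y : Fin (2*s+1), sig D (vt m s (j+1) y) none := by
    have hpt : ∀ y : Fin (2*s+1), sig D none (vt m s (j+1) (y+1))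
        = - sig D (vt m s (j+1) (y+1)) none := by
      intro y
      refine sig_rev hD ?_
      rw [show j + 1 = m from hj]; exact adjTop m (y+1)
    rw [Finset.sum_congr rfl (fun y _ => hpt y), Finset.sum_neg_distrib]
    congr 1
    apply shiftm; intro z; simp
  have e34 : ∑ y : Fin (2*s+1), sig D (vt m s (j+1) (y+1)) (vt m s j y)
      + ∑ y : Fin (2*s+1), sig D (vt m s j y) (vt m s (j+1) (y-1)) = - Fj m s D j := by
    rw [← Finset.sum_add_distrib]
    exact sum_lower hs hD (by omega)
  linarith [hsum, e1, e2, e34]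

lemma chain (hs : 1 ≤ s)
    (hD : (Myc m (cycleGraph (2*s+1))).IsAcyclicOrientation D) (hdep : ¬ DepArc D) :
    ∀ j, j + 1 ≤ m → Fj m s D j = Fj m s D 0 := by
  intro j
  induction j with
  | zero => intro _; rfl
  | succ k ih => intro hk; rw [mid hs hD hdep (by omega), ih (by omega)]

lemma parity_S (hs : 1 ≤ s) (S0 : Fin (2*s+1) → ℤ) (hS : ∀ x, S0 x = 1 ∨ S0 x = -1) :
    ∑ x, S0 x ≠ 0 := by
  intro h0
  have hcast : ((∑ x, S0 x : ℤ) : ZMod 2) = 0 := by rw [h0]; simp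
  rw [Int.cast_sum] at hcast
  have hone : ∀ x : Fin (2*s+1), ((S0 x : ℤ) : ZMod 2) = 1 := by
    intro x
    rcases hS x with h | h <;> rw [h] <;> decide
  rw [Finset.sum_congr rfl (fun x _ => hone x)] at hcast
  simp only [Finset.sum_const, Finset.card_univ, Fintype.card_fin, nsmul_eq_mul, mul_one] at hcast
  have : ((2*s+1 : ℕ) : ZMod 2) = 1 := by
    push_cast
    ring_nf
    rw [show ((2:ZMod 2)) = 0 by decide]
    ring
  rw [this] at hcast
  exact one_ne_zero hcast

/-- THE CORE: every acyclic orientation of a generalized Mycielskian of an odd cycle has a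
dependent arc. -/
theorem myc_dep (m s : ℕ) (hs : 1 ≤ s) (hm : 1 ≤ m)
    {D : Option (Fin (m+1) × Fin (2*s+1)) → Option (Fin (m+1) × Fin (2*s+1)) → Prop}
    (hD : (Myc m (cycleGraph (2*s+1))).IsAcyclicOrientation D) : DepArc D := by
  by_contra hdep
  haveI := neZa s
  have h0 := level0 hs hm hD hdep
  have hch := chain hs hD hdep (m-1) (by omega)
  have htp := top hs hD hdep (j := m-1) (by omega)
  have hS : ∑ x : Fin (2*s+1), sig D (vt m s 0 x) (vt m s 0 (x+1)) ≠ 0 := by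
    apply parity_S hs
    intro x
    by_cases hd : D (vt m s 0 x) (vt m s 0 (x+1))
    · left; exact sig_pos hd
    · right; exact sig_neg hd
  have : Fj m s D 0 = 0 := by rw [← hch, htp]
  rw [this] at h0
  omega

end core
end CCCore

namespace CCHom
open CCWork CCWork2

variable {V W : Type*} {G : SimpleGraph V} {H : SimpleGraph W}

def pullD (f : G →g H) (D : W → W → Prop) : V → V → Prop :=
  fun x y => G.Adj x y ∧ D (f x) (f y)

lemma pull_orient (f : G →g H) {D : W → W → Prop} (hD : H.IsAcyclicOrientation D) :
    G.IsAcyclicOrientation (pullD f D) := by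
  refine ⟨fun a b h => h.1, fun a b hab => ?_, fun a h => ?_⟩
  · constructor
    · rintro ⟨-, hd⟩ ⟨-, hd'⟩
      exact (hD.2.1 _ _ (f.map_adj hab)).mp hd hd'
    · intro hn
      by_cases hd : D (f b) (f a)
      · exact absurd ⟨hab.symm, hd⟩ hn
      · exact ⟨hab, (hD.2.1 _ _ (f.map_adj hab)).mpr hd⟩
  · exact hD.2.2 (f a) (Relation.TransGen.lift f (fun x y (hxy : pullD f D x y) => hxy.2) _ _ h)

lemma pull_depArc (f : G →g H) {D : W → W → Prop} (hdep : DepArc (pullD f D)) : DepArc D := by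
  obtain ⟨a, b, c, h1, h2, h3⟩ := hdep
  exact ⟨f a, f b, f c, h1.2, h2.2, Relation.TransGen.lift f (fun x y (hxy : pullD f D x y) => hxy.2) _ _ h3⟩

/- ## cycle-graph adjacency in terms of values, and folding homomorphisms -/

lemma mod_eq_one {A N : ℕ} (h2 : 2 ≤ N) (hA : A < 2*N) : A % N = 1 ↔ (A = 1 ∨ A = N + 1) := by
  constructor
  · intro h
    rcases Nat.lt_or_ge A N with hlt | hge
    · left; rwa [Nat.mod_eq_of_lt hlt] at h
    · right
      have hlt2 : A - N < N := by omega
      rw [Nat.mod_eq_sub_mod hge, Nat.mod_eq_of_lt hlt2] at h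
      omega
  · rintro (rfl | rfl)
    · exact Nat.mod_eq_of_lt (by omega)
    · rw [Nat.add_mod_left]; exact Nat.mod_eq_of_lt (by omega)

lemma cyc_adj_val {N : ℕ} (hN : 2 ≤ N) {u v : Fin N} :
    (cycleGraph N).Adj u v ↔
      (u.val + 1 = v.val ∨ v.val + 1 = u.val ∨
        (u.val + 1 = N ∧ v.val = 0) ∨ (v.val + 1 = N ∧ u.val = 0)) := by
  have hu := u.isLt
  have hv := v.isLt
  rw [cycleGraph_adj', Fin.sub_def, Fin.sub_def]
  show (N - v.val + u.val) % N = 1 ∨ (N - u.val + v.val) % N = 1 ↔ _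
  rw [mod_eq_one hN (by omega), mod_eq_one hN (by omega)]
  omega

def cycStep (n : ℕ) (hn : 3 ≤ n) : cycleGraph (n+2) →g cycleGraph n where
  toFun x := ⟨if x.val < n then x.val else x.val - 2, by have := x.isLt; split <;> omega⟩
  map_rel' := by
    intro u v huv
    rw [cyc_adj_val (by omega)] at huv
    rw [cyc_adj_val (by omega)]
    have hu := u.isLt
    have hv := v.isLt
    show (if u.val < n then u.val else u.val - 2) + 1 = (if v.val < n then v.val else v.val - 2)
      ∨ _ ∨ _ ∨ _
    by_cases h1 : u.val < n <;> by_cases h2 : v.val < n <;>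
      simp only [if_pos, if_neg, h1, h2, if_true, if_false] <;> omega

def cycFold (s : ℕ) (hs : 1 ≤ s) : ∀ t : ℕ, cycleGraph (2*s+1+2*t) →g cycleGraph (2*s+1)
  | 0 => Hom.id
  | (t+1) => (cycFold s hs t).comp (cycStep (2*s+1+2*t) (by omega))

lemma cycFold' {s s' : ℕ} (hs : 1 ≤ s) (hss : s ≤ s') :
    Nonempty (cycleGraph (2*s'+1) →g cycleGraph (2*s+1)) := by
  obtain ⟨t, rfl⟩ : ∃ t, s' = s + t := ⟨s' - s, by omega⟩
  have h : 2*(s+t)+1 = 2*s+1+2*t := by ring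
  rw [h]
  exact ⟨cycFold s hs t⟩

/- ## Mycielskian functoriality and level folding -/

def mycMap (k : ℕ) (f : G →g H) : Myc k G →g Myc k H where
  toFun v := match v with
    | none => none
    | some (i, x) => some (i, f x)
  map_rel' := by
    rintro (_ | ⟨i, x⟩) (_ | ⟨j, y⟩) h
    · exact h
    · exact h
    · exact h
    · exact ⟨f.map_adj h.1, h.2⟩

def mycStep (G : SimpleGraph V) (k : ℕ) : Myc (k+1) G →g Myc k G where
  toFun v := match v with
    | none => none
    | some (i, x) => some (⟨i.val - 1, by omega⟩, x)
  map_rel' := by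
    rintro (_ | ⟨i, x⟩) (_ | ⟨j, y⟩) h
    · exact h
    · show j.val - 1 = k
      have hj : j.val = k + 1 := h
      omega
    · show i.val - 1 = k
      have hi : i.val = k + 1 := h
      omega
    · refine ⟨h.1, ?_⟩
      have hc := h.2
      show (i.val - 1 = 0 ∧ j.val - 1 = 0) ∨ i.val - 1 + 1 = j.val - 1 ∨ j.val - 1 + 1 = i.val - 1
      omega

def mycFold (G : SimpleGraph V) (m : ℕ) : ∀ d : ℕ, Myc (m + d) G →g Myc m G
  | 0 => Hom.id
  | (d+1) => (mycFold G m d).comp (mycStep G (m+d))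

lemma mycFold' {m k : ℕ} (G : SimpleGraph V) (hmk : m ≤ k) :
    Nonempty (Myc k G →g Myc m G) := by
  obtain ⟨d, rfl⟩ : ∃ d, k = m + d := ⟨k - m, by omega⟩
  exact ⟨mycFold G m d⟩

def tensorPair {U : Type*} {K : SimpleGraph U} (f : K →g G) (g : K →g H) :
    K →g G.tensorProd H where
  toFun v := (f v, g v)
  map_rel' := fun h => ⟨f.map_adj h, g.map_adj h⟩

end CCHom

namespace CCFinal
open CCWork CCWork2 CCWork3 CCCore CCHom

/- ## triangle-freeness -/

lemma cyc_tri {s : ℕ} (hs : 2 ≤ s) {x y z : Fin (2*s+1)}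
    (h1 : (cycleGraph (2*s+1)).Adj x y) (h2 : (cycleGraph (2*s+1)).Adj y z)
    (h3 : (cycleGraph (2*s+1)).Adj x z) : False := by
  rw [cyc_adj_val (by omega)] at h1 h2 h3
  have hx := x.isLt
  have hy := y.isLt
  have hz := z.isLt
  omega

lemma myc_tri {m s : ℕ} (hs : 2 ≤ s) (hm : 1 ≤ m) :
    ∀ {x y z}, (Myc m (cycleGraph (2*s+1))).Adj x y →
      (Myc m (cycleGraph (2*s+1))).Adj y z → (Myc m (cycleGraph (2*s+1))).Adj x z → False := by
  rintro (_ | ⟨i, a⟩) (_ | ⟨j, b⟩) (_ | ⟨k, c⟩) h1 h2 h3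
  · exact h1
  · exact h1
  · exact h3
  · have e1 : j.val = m := h1
    have e2 : k.val = m := h3
    have e3 := h2.2
    omega
  · exact h2
  · have e1 : i.val = m := h1
    have e2 : k.val = m := h2
    have e3 := h3.2
    omega
  · have e1 : j.val = m := h2
    have e2 : i.val = m := h3
    have e3 := h1.2
    omega
  · exact cyc_tri hs h1.1 h2.1 h3.1

lemma prod_tri {α β : Type*} {G : SimpleGraph α} {H : SimpleGraph β}
    (hG : ∀ {x y z}, G.Adj x y → G.Adj y z → G.Adj x z → False) :
    ∀ {x y z}, (G.tensorProd H).Adj x y → (G.tensorProd H).Adj y z →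
      (G.tensorProd H).Adj x z → False :=
  fun h1 h2 h3 => hG h1.1 h2.1 h3.1

/- ## colorings -/

def bcol (N : ℕ) (h5 : 5 ≤ N) (x : Fin N) : Fin 4 :=
  ⟨if x.val + 1 = N then 2 else x.val % 2, by split <;> omega⟩

lemma bcol_proper {N : ℕ} (h5 : 5 ≤ N) {u v : Fin N} (h : (cycleGraph N).Adj u v) :
    bcol N h5 u ≠ bcol N h5 v := by
  rw [cyc_adj_val (by omega)] at h
  have hu := u.isLt
  have hv := v.isLt
  intro he
  have hval : (if u.val + 1 = N then 2 else u.val % 2)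
      = (if v.val + 1 = N then 2 else v.val % 2) := congrArg Fin.val he
  split_ifs at hval <;> omega

def mcol (m s : ℕ) (hs : 2 ≤ s) : Option (Fin (m+1) × Fin (2*s+1)) → Fin 4 :=
  fun v => match v with
  | none => 3
  | some (_, x) => bcol (2*s+1) (by omega) x

lemma mcol_proper {m s : ℕ} (hs : 2 ≤ s) :
    ∀ {u v}, (Myc m (cycleGraph (2*s+1))).Adj u v → mcol m s hs u ≠ mcol m s hs v := by
  rintro (_ | ⟨i, a⟩) (_ | ⟨j, b⟩) h
  · exact h.elim
  · intro he
    have hval : (3 : ℕ) = (if b.val + 1 = 2*s+1 then 2 else b.val % 2) := congrArg Fin.val he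
    have hb := b.isLt
    split_ifs at hval <;> omega
  · intro he
    have hval : (if a.val + 1 = 2*s+1 then 2 else a.val % 2) = (3:ℕ) := congrArg Fin.val he
    have ha := a.isLt
    split_ifs at hval <;> omega
  · exact bcol_proper (by omega) h.1

/- ## assembly -/

lemma circ_eq_four {V : Type*} [Fintype V] (G : SimpleGraph V)
    (c : V → Fin 4) (hc : ∀ {u v}, G.Adj u v → c u ≠ c v)
    (h3 : ∀ {x y z}, G.Adj x y → G.Adj y z → G.Adj x z → False)
    (hdep : ∀ D, G.IsAcyclicOrientation D → DepArc D) :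
    G.circChrom = 4 := by
  have horient := orientOf_isAcyclic c (fun {u v} h => hc h)
  have hub : G.Imb (orientOf G c) ≤ 4 := imb_le_four c (fun {u v} h => hc h)
  have hlb : ∀ D, G.IsAcyclicOrientation D → (4:ℝ) ≤ G.Imb D := fun D hD =>
    le_imb_of_depArc hD (fun {x y z} a b c' => h3 a b c') (hdep D hD)
  have hmem : (4:ℝ) ∈ {x : ℝ | ∃ D, G.IsAcyclicOrientation D ∧ x = G.Imb D} :=
    ⟨orientOf G c, horient, (le_antisymm hub (hlb _ horient)).symm⟩
  refine IsLeast.csInf_eq ⟨hmem, ?_⟩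
  rintro x ⟨D, hD, rfl⟩
  exact hlb D hD

lemma myc_circ (m s : ℕ) (hm : 1 ≤ m) (hs : 2 ≤ s) :
    (Myc m (cycleGraph (2*s+1))).circChrom = 4 := by
  refine circ_eq_four _ (mcol m s hs) (fun {u v} h => mcol_proper hs h)
    (fun {x y z} a b c => myc_tri hs hm a b c) ?_
  intro D hD
  exact myc_dep m s (by omega) hm hD

lemma prod_circ (m n s t : ℕ) (hm : 1 ≤ m) (hn : 1 ≤ n) (hs : 2 ≤ s) (ht : 2 ≤ t) :
    ((Myc m (cycleGraph (2*s+1))).tensorProd (Myc n (cycleGraph (2*t+1)))).circChrom = 4 := by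
  refine circ_eq_four _ (fun v => mcol m s hs v.1) (fun {u v} h => mcol_proper hs h.1)
    (fun {x y z} a b c => prod_tri (fun {x y z} a b c => myc_tri hs hm a b c) a b c) ?_
  intro D hD
  -- pull back along a hom from K = Myc (max m n) (cycleGraph (2 * max s t + 1))
  obtain ⟨g1⟩ := cycFold' (s := s) (s' := max s t) (by omega) (le_max_left s t)
  obtain ⟨g2⟩ := cycFold' (s := t) (s' := max s t) (by omega) (le_max_right s t)
  obtain ⟨l1⟩ := mycFold' (m := m) (k := max m n) (cycleGraph (2*s+1)) (le_max_left m n)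
  obtain ⟨l2⟩ := mycFold' (m := n) (k := max m n) (cycleGraph (2*t+1)) (le_max_right m n)
  set f1 := l1.comp (mycMap (max m n) g1)
  set f2 := l2.comp (mycMap (max m n) g2)
  set f := tensorPair f1 f2
  have hDK := pull_orient f hD
  exact pull_depArc f (myc_dep (max m n) (max s t) (by omega) (by omega) hDK)

end CCFinal

open CCFinal in
/-- For `s, t > 1` and `m, n ≥ 1`, Hedetniemi's equality holds for the circular chromatic
number of `M_m(C_{2s+1}) × M_n(C_{2t+1})`, and the common value is `4`. -/
theorem circChrom_tensorProd_myc (m n s t : ℕ)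
    (hm : 1 ≤ m) (hn : 1 ≤ n) (hs : 1 < s) (ht : 1 < t) :
    ((SimpleGraph.Myc m (cycleGraph (2 * s + 1))).tensorProd
        (SimpleGraph.Myc n (cycleGraph (2 * t + 1)))).circChrom =
      min (SimpleGraph.Myc m (cycleGraph (2 * s + 1))).circChrom
        (SimpleGraph.Myc n (cycleGraph (2 * t + 1))).circChrom ∧
    ((SimpleGraph.Myc m (cycleGraph (2 * s + 1))).tensorProd
        (SimpleGraph.Myc n (cycleGraph (2 * t + 1)))).circChrom = 4 := by
  have h1 := myc_circ m s hm (by omega)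
  have h2 := myc_circ n t hn (by omega)
  have h3 := prod_circ m n s t hm hn (by omega) (by omega)
  rw [h1, h2, h3]
  norm_num
end
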